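/- For every graph G, the neighborhood diversity is at most 2^vc + vc, where vc is the vertex cover number: nd(G) ≤ 2^{vc(G)} + vc(G). -/
import Mathlib


variable {V : Type*}

/-- Two vertex sets are adjacent if some edge joins them. -/
def SetsAdj (G : SimpleGraph V) (A B : Set V) : Prop :=
  ∃ a ∈ A, ∃ b ∈ B, G.Adj a b

/-- `u` and `v` are connected inside the induced subgraph `G[S]`. -/
def ReachIn (G : SimpleGraph V) (S : Set V) (u v : V) : Prop :=
  ∃ (hu : u ∈ S) (hv : v ∈ S), (G.induce S).Reachable ⟨u, hu⟩ ⟨v, hv⟩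

/-- `C` is (the vertex set of) a connected component of the induced subgraph `G[S]`. -/
def IsCompOf (G : SimpleGraph V) (S C : Set V) : Prop :=
  ∃ v ∈ S, C = {u | ReachIn G S u v}

/-- A safe set: nonempty, and no component of `G[S]` is adjacent to a larger
component of `G - S`. -/
def IsSafeSet (G : SimpleGraph V) (S : Set V) : Prop :=
  S.Nonempty ∧ ∀ C D : Set V, IsCompOf G S C → IsCompOf G Sᶜ D →
    SetsAdj G C D → D.ncard ≤ C.ncard

/-- A connected safe set. -/
def IsConnSafeSet (G : SimpleGraph V) (S : Set V) : Prop :=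
  IsSafeSet G S ∧ (G.induce S).Connected

/-- The safe number: minimum size of a safe set. -/
noncomputable def sNum (G : SimpleGraph V) : ℕ :=
  sInf {n | ∃ S : Set V, IsSafeSet G S ∧ S.ncard = n}

/-- The connected safe number: minimum size of a connected safe set. -/
noncomputable def csNum (G : SimpleGraph V) : ℕ :=
  sInf {n | ∃ S : Set V, IsConnSafeSet G S ∧ S.ncard = n}

/-- Two vertices are twins if they have the same neighbors, apart from each other. -/
def AreTwins (G : SimpleGraph V) (u v : V) : Prop :=
  G.neighborSet u \ {v} = G.neighborSet v \ {u}

/-- Two twin sets are adjacent: every vertex of one is adjacent to every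
(distinct) vertex of the other. -/
def TwinSetsAdj (G : SimpleGraph V) (A B : Set V) : Prop :=
  ∀ a ∈ A, ∀ b ∈ B, a ≠ b → G.Adj a b

/-- Twin sets `T i` and `T i'` are reachable in `S`: either they are equal and form
a clique, or there is a sequence of twin sets, each meeting `S`, starting at `T i`,
ending at `T i'`, with consecutive sets adjacent. -/
def ReachableTwinSets {k : ℕ} (G : SimpleGraph V) (T : Fin k → Set V) (S : Set V)
    (i i' : Fin k) : Prop :=
  (i = i' ∧ G.IsClique (T i)) ∨
  ∃ ℓ : ℕ, 1 ≤ ℓ ∧ ∃ f : Fin (ℓ + 1) → Fin k, f 0 = i ∧ f (Fin.last ℓ) = i' ∧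
    (∀ j, (T (f j) ∩ S).Nonempty) ∧
    ∀ j : Fin ℓ, TwinSetsAdj G (T (f j.castSucc)) (T (f j.succ))

/-- The vertex cover number. -/
noncomputable def vcNum [Fintype V] (G : SimpleGraph V) : ℕ :=
  sInf {n | ∃ X : Set V, (∀ u v : V, G.Adj u v → u ∈ X ∨ v ∈ X) ∧ X.ncard = n}

/-- The neighborhood diversity: minimum number of parts of a partition of the
vertex set into sets of pairwise twin vertices. -/
noncomputable def ndNum [Fintype V] (G : SimpleGraph V) : ℕ :=
  sInf {k | ∃ T : Fin k → Set V, (∀ v : V, ∃! i, v ∈ T i) ∧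
    ∀ i, ∀ u ∈ T i, ∀ v ∈ T i, AreTwins G u v}

theorem stmt8 [Fintype V] (G : SimpleGraph V) :
    ndNum G ≤ 2 ^ vcNum G + vcNum G := by
  classical
  have hne : {n | ∃ X : Set V, (∀ u v : V, G.Adj u v → u ∈ X ∨ v ∈ X) ∧ X.ncard = n}.Nonempty :=
    ⟨(Set.univ : Set V).ncard, Set.univ, fun u v _ => Or.inl trivial, rfl⟩
  obtain ⟨X, hX, hXcard⟩ : ∃ X : Set V, (∀ u v : V, G.Adj u v → u ∈ X ∨ v ∈ X) ∧
      X.ncard = vcNum G := Nat.sInf_mem hne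
  haveI : Fintype ↥X := Fintype.ofFinite _
  have hcard : Fintype.card ↥X = vcNum G := by
    rw [← hXcard, ← Nat.card_coe_set_eq, Nat.card_eq_fintype_card]
  have e : (Set ↥X ⊕ ↥X) ≃ Fin (2 ^ vcNum G + vcNum G) :=
    Fintype.equivFinOfCardEq (by simp [hcard])
  set P : Set ↥X ⊕ ↥X → Set V := fun i => match i with
    | Sum.inl s => {v | v ∉ X ∧ {x : ↥X | G.Adj v ↑x} = s}
    | Sum.inr x => {(x : V)} with hP
  -- each vertex in exactly one part
  have huniqP : ∀ v : V, ∃! i, v ∈ P i := by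
    intro v
    by_cases hv : v ∈ X
    · refine ⟨Sum.inr ⟨v, hv⟩, rfl, ?_⟩
      rintro (s | x) hi
      · exact absurd hv hi.1
      · simp only [hP, Set.mem_singleton_iff] at hi
        subst hi; rfl
    · refine ⟨Sum.inl {x : ↥X | G.Adj v ↑x}, ⟨hv, rfl⟩, ?_⟩
      rintro (s | x) hi
      · simp only [hP] at hi
        rw [hi.2]
      · simp only [hP, Set.mem_singleton_iff] at hi
        subst hi; exact absurd x.2 hv
  -- parts consist of pairwise twins
  have htwinP : ∀ i, ∀ u ∈ P i, ∀ v ∈ P i, AreTwins G u v := by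
    rintro (s | x) u hu v hv
    · obtain ⟨hu1, hu2⟩ := hu
      obtain ⟨hv1, hv2⟩ := hv
      have hnb : ∀ w : V, w ∉ X → {x : ↥X | G.Adj w ↑x} = s →
          G.neighborSet w = Subtype.val '' s := by
        intro w hw hws
        ext z
        constructor
        · intro hz
          have hzX : z ∈ X := by
            rcases hX w z hz with h | h
            · exact absurd h hw
            · exact h
          exact ⟨⟨z, hzX⟩, by rw [← hws]; exact hz, rfl⟩
        · rintro ⟨⟨z', hz'⟩, hzs, rfl⟩
          rw [← hws] at hzs
          exact hzs
      have hU := hnb u hu1 hu2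
      have hV := hnb v hv1 hv2
      have hsub : Subtype.val '' s ⊆ X := by
        rintro z ⟨⟨z', hz'⟩, _, rfl⟩; exact hz'
      unfold AreTwins
      rw [hU, hV, Set.diff_singleton_eq_self (fun h => hv1 (hsub h)),
        Set.diff_singleton_eq_self (fun h => hu1 (hsub h))]
    · simp only [hP, Set.mem_singleton_iff] at hu hv
      subst hu; subst hv; rfl
  have hmem : 2 ^ vcNum G + vcNum G ∈ {k | ∃ T : Fin k → Set V, (∀ v : V, ∃! i, v ∈ T i) ∧
      ∀ i, ∀ u ∈ T i, ∀ v ∈ T i, AreTwins G u v} := by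
    refine ⟨fun j => P (e.symm j), fun v => ?_, fun i => htwinP (e.symm i)⟩
    obtain ⟨i, hi, huniq⟩ := huniqP v
    refine ⟨e i, by simpa using hi, fun j hj => ?_⟩
    have := huniq (e.symm j) hj
    rw [← this, Equiv.apply_symm_apply]
  exact Nat.sInf_le hmem
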